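/- Let ((Aₙ),(Ψₙ)) be a factorable weak operator-valued frame in B(H,H₀). Then: (i) the analysis operator θ_A : h ↦ Σₙ Lₙ Aₙ h is a bounded injective linear operator from H to ℓ²(ℕ,H₀); (ii) the synthesis operator θ_Ψ* : ℓ²(ℕ,H₀) → H, z ↦ Σₙ Ψₙ* Lₙ* z, is a bounded surjective linear operator; (iii) the frame operator factors as S_{A,Ψ} = θ_Ψ* θ_A; (iv) the operator P_{A,Ψ} := θ_A S_{A,Ψ}⁻¹ θ_Ψ* on ℓ²(ℕ,H₀) is an idempotent (P_{A,Ψ}² = P_{A,Ψ}) whose range equals θ_A(H). -/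

import Mathlib

noncomputable section

open ContinuousLinearMap Filter

variable {H H₀ : Type*} [NormedAddCommGroup H] [InnerProductSpace ℂ H] [CompleteSpace H]
  [NormedAddCommGroup H₀] [InnerProductSpace ℂ H₀] [CompleteSpace H₀]

/-- `ℓ²(I, H₀)`: square-summable `H₀`-valued families indexed by `I`. -/
abbrev l2 (I : Type*) (H₀ : Type*) [NormedAddCommGroup H₀] : Type _ :=
  lp (fun _ : I => H₀) 2

/-- The isometry `Lᵢ : H₀ → ℓ²(I,H₀)` sending `h` to the family equal to `h` at index `i`
and `0` elsewhere. -/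
def Lop {I : Type*} [DecidableEq I] (i : I) : H₀ →L[ℂ] l2 I H₀ :=
  LinearMap.mkContinuous
    { toFun := fun h => lp.single 2 i h
      map_add' := by
        intro a b
        apply lp.ext
        funext j
        by_cases hj : j = i
        · subst hj; simp [lp.single_apply_self]
        · simp [lp.single_apply_ne _ _ _ hj, lp.coeFn_add]
      map_smul' := by
        intro c a
        simp [lp.single_smul] }
    1
    (by
      intro h
      simpa using (lp.norm_single (p := 2) (by norm_num) (fun _ : I => h) i).le)

/-- Convergence of the sequence of partial sums `∑_{n < m} f n` to `x` as `m → ∞`. -/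
def SeqSum {E : Type*} [AddCommMonoid E] [TopologicalSpace E] (f : ℕ → E) (x : E) : Prop :=
  Tendsto (fun m => ∑ n ∈ Finset.range m, f n) atTop (nhds x)


open scoped InnerProductSpace
set_option linter.unusedSectionVars false

lemma inner_Lop_left (i : ℕ) (x : H₀) (f : l2 ℕ H₀) :
    ⟪(Lop i x : l2 ℕ H₀), f⟫_ℂ = ⟪x, f i⟫_ℂ :=
  lp.inner_single_left i x f

lemma adj_Lop (i : ℕ) (z : l2 ℕ H₀) : adjoint (Lop i) z = z i := by
  refine ext_inner_right ℂ fun x => ?_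
  rw [adjoint_inner_left]
  have h := lp.inner_single_right (𝕜 := ℂ) i x z
  exact h

lemma seqsum_coord (B : ℕ → H →L[ℂ] H₀) (θ : H →L[ℂ] l2 ℕ H₀)
    (hθ : ∀ h, SeqSum (fun n => Lop n (B n h)) (θ h)) (h : H) (n : ℕ) :
    (θ h) n = B n h := by
  refine ext_inner_left ℂ fun x => ?_
  have h1 : Tendsto
      (fun m => ⟪(Lop n x : l2 ℕ H₀), ∑ k ∈ Finset.range m, Lop k (B k h)⟫_ℂ)
      atTop (nhds ⟪(Lop n x : l2 ℕ H₀), θ h⟫_ℂ) :=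
    Filter.Tendsto.inner tendsto_const_nhds (hθ h)
  have h2 : ∀ m, n < m →
      ⟪(Lop n x : l2 ℕ H₀), ∑ k ∈ Finset.range m, Lop k (B k h)⟫_ℂ = ⟪x, B n h⟫_ℂ := by
    intro m hm
    rw [inner_Lop_left]
    have : (((∑ k ∈ Finset.range m, Lop k (B k h)) : l2 ℕ H₀) : ∀ i : ℕ, H₀) n
        = ∑ k ∈ Finset.range m, ((Lop k (B k h) : l2 ℕ H₀) : ∀ i : ℕ, H₀) n := by
      rw [lp.coeFn_sum]; simp
    rw [this, Finset.sum_eq_single n]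
    · simp [Lop, LinearMap.mkContinuous_apply, lp.single_apply_self]
    · intro k _ hk
      exact lp.single_apply_ne 2 k _ (Ne.symm hk)
    · intro hn; exact absurd (Finset.mem_range.2 hm) hn
  have := tendsto_nhds_unique (h1.congr' ?_) (tendsto_const_nhds (x := (⟪x, B n h⟫_ℂ : ℂ)))
  · rw [← inner_Lop_left n x (θ h), this]
  · filter_upwards [eventually_gt_atTop n] with m hm using h2 m hm

/-- For a factorable weak OVF: the analysis operator `θ_A` is injective, the
synthesis operator `θ_Ψ* : z ↦ Σ Ψₙ* Lₙ* z` is bounded surjective, `S_{A,Ψ} = θ_Ψ* θ_A`, and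
`P_{A,Ψ} = θ_A S⁻¹ θ_Ψ*` is an idempotent with range `θ_A(H)`. -/
theorem stmt2
    (A Ψ : ℕ → H →L[ℂ] H₀) (S T : H →L[ℂ] H)
    (hS : ∀ h : H, SeqSum (fun n => adjoint (Ψ n) (A n h)) (S h))
    (hST : S ∘L T = 1) (hTS : T ∘L S = 1)
    (θA θΨ : H →L[ℂ] l2 ℕ H₀)
    (hθA : ∀ h : H, SeqSum (fun n => Lop n (A n h)) (θA h))
    (hθΨ : ∀ h : H, SeqSum (fun n => Lop n (Ψ n h)) (θΨ h)) :
    -- (i)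
    Function.Injective θA ∧
    -- (ii)
    ((∀ z : l2 ℕ H₀, SeqSum (fun n => adjoint (Ψ n) (adjoint (Lop n) z)) (adjoint θΨ z)) ∧
      Function.Surjective (adjoint θΨ)) ∧
    -- (iii)
    S = adjoint θΨ ∘L θA ∧
    -- (iv)
    ((θA ∘L T ∘L adjoint θΨ) ∘L (θA ∘L T ∘L adjoint θΨ) = θA ∘L T ∘L adjoint θΨ ∧
      Set.range (θA ∘L T ∘L adjoint θΨ) = Set.range θA) := by

  have hTSapp : ∀ h : H, T (S h) = h := fun h => by
    have := DFunLike.congr_fun hTS h; simpa using this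
  have hSTapp : ∀ h : H, S (T h) = h := fun h => by
    have := DFunLike.congr_fun hST h; simpa using this
  -- (iii)
  have hfact : S = adjoint θΨ ∘L θA := by
    refine ContinuousLinearMap.ext fun h => ?_
    refine ext_inner_right ℂ fun k => ?_
    have h1 : Tendsto (fun m => ⟪(∑ n ∈ Finset.range m, adjoint (Ψ n) (A n h) : H), k⟫_ℂ)
        atTop (nhds ⟪S h, k⟫_ℂ) :=
      Filter.Tendsto.inner (hS h) tendsto_const_nhds
    have h2 : ∀ m, (⟪(∑ n ∈ Finset.range m, adjoint (Ψ n) (A n h) : H), k⟫_ℂ)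
        = ∑ n ∈ Finset.range m, ⟪A n h, Ψ n k⟫_ℂ := by
      intro m
      rw [sum_inner]
      exact Finset.sum_congr rfl fun n _ => adjoint_inner_left _ _ _
    have h3 : HasSum (fun n => ⟪(θA h) n, (θΨ k) n⟫_ℂ) ⟪θA h, θΨ k⟫_ℂ :=
      lp.hasSum_inner (θA h) (θΨ k)
    have h3' : HasSum (fun n => ⟪A n h, Ψ n k⟫_ℂ) ⟪θA h, θΨ k⟫_ℂ := by
      refine h3.congr_fun fun n => by
        rw [seqsum_coord A θA hθA h n, seqsum_coord Ψ θΨ hθΨ k n]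
    have h4 := h3'.tendsto_sum_nat
    have h5 := tendsto_nhds_unique (h1.congr h2) h4
    rw [comp_apply, adjoint_inner_left, h5]
  have hadjL : ∀ (n : ℕ) (x : H₀), adjoint θΨ (Lop n x) = adjoint (Ψ n) x := by
    intro n x
    refine ext_inner_right ℂ fun k => ?_
    rw [adjoint_inner_left, adjoint_inner_left, inner_Lop_left,
      seqsum_coord Ψ θΨ hθΨ k n]
  refine ⟨?_, ⟨?_, ?_⟩, hfact, ?_, ?_⟩
  · -- injective
    intro h₁ h₂ hh
    have : S h₁ = S h₂ := by rw [hfact]; simp [hh]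
    calc h₁ = T (S h₁) := (hTSapp h₁).symm
      _ = T (S h₂) := by rw [this]
      _ = h₂ := hTSapp h₂
  · -- SeqSum representation of the synthesis operator
    intro z
    have hsingle : HasSum (fun n => (lp.single 2 n (z n) : l2 ℕ H₀)) z :=
      lp.hasSum_single (by norm_num) z
    have h1 := ((adjoint θΨ).continuous.tendsto z).comp hsingle.tendsto_sum_nat
    refine h1.congr fun m => ?_
    simp only [Function.comp]
    rw [map_sum]
    exact Finset.sum_congr rfl fun n _ => by
      rw [adj_Lop]
      exact hadjL n (z n)
  · -- surjective
    intro h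
    exact ⟨θA (T h), by rw [← comp_apply, ← hfact, hSTapp]⟩
  · -- idempotent
    ext z
    simp only [comp_apply]
    rw [← comp_apply (adjoint θΨ) θA, ← hfact, hTSapp]
  · -- range
    apply le_antisymm
    · rintro _ ⟨z, rfl⟩
      exact ⟨T (adjoint θΨ z), rfl⟩
    · rintro _ ⟨h, rfl⟩
      refine ⟨θA h, ?_⟩
      simp only [comp_apply]
      rw [← comp_apply (adjoint θΨ) θA, ← hfact, hTSapp]
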